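/- Let $A, B \subseteq \mathbb{R}$ be closed sets of positive Lebesgue measure. Then the product set $A \times B \subset \mathbb{R}^2$ is not $c$-removable; that is, there exists a function $f : \mathbb{R}^2 \to \mathbb{R}$ which is continuous on $\mathbb{R}^2$ and locally convex on $\mathbb{R}^2 \setminus (A \times B)$, but which is not convex on $\mathbb{R}^2$. -/

import Mathlib

open MeasureTheory intervalIntegral Set Filter

noncomputable def gfun (A : Set ℝ) (x : ℝ) : ℝ := ∫ t in (0:ℝ)..x, A.indicator 1 t
noncomputable def Gfun (A : Set ℝ) (x : ℝ) : ℝ := ∫ t in (0:ℝ)..x, gfun A t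

lemma indII {A : Set ℝ} (hA : MeasurableSet A) (a b : ℝ) :
    IntervalIntegrable (A.indicator (1 : ℝ → ℝ)) volume a b := by
  have key : ∀ c d : ℝ, IntegrableOn (A.indicator (1 : ℝ → ℝ)) (Ioc c d) volume := by
    intro c d
    have hc : IntegrableOn (fun _ : ℝ => (1:ℝ)) (Ioc c d) volume :=
      integrableOn_const measure_Ioc_lt_top.ne (by simp)
    refine hc.mono' (measurable_one.indicator hA).aestronglyMeasurable
      (ae_of_all _ fun x => ?_)
    by_cases h : x ∈ A <;> simp [h]
  exact ⟨key a b, key b a⟩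

lemma g_cont {A : Set ℝ} (hA : MeasurableSet A) : Continuous (gfun A) :=
  intervalIntegral.continuous_primitive (fun a b => indII hA a b) 0

lemma g_diff {A : Set ℝ} (hA : MeasurableSet A) {a b : ℝ} (hab : a ≤ b) :
    gfun A b - gfun A a = (volume (A ∩ Ioc a b)).toReal := by
  have h1 : gfun A a + ∫ t in a..b, A.indicator 1 t = gfun A b :=
    integral_add_adjacent_intervals (indII hA 0 a) (indII hA a b)
  have h2 : (∫ t in a..b, A.indicator (1 : ℝ → ℝ) t) = (volume (A ∩ Ioc a b)).toReal := by
    rw [integral_of_le hab, setIntegral_indicator hA, inter_comm]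
    simp [setIntegral_const]
    rfl
  linarith [h1, h2]

lemma g_diff_nonneg {A : Set ℝ} (hA : MeasurableSet A) {a b : ℝ} (hab : a ≤ b) :
    0 ≤ gfun A b - gfun A a := by
  rw [g_diff hA hab]; positivity

lemma g_diff_le {A : Set ℝ} (hA : MeasurableSet A) {a b : ℝ} (hab : a ≤ b) :
    gfun A b - gfun A a ≤ b - a := by
  rw [g_diff hA hab]
  have h1 : volume (A ∩ Ioc a b) ≤ volume (Ioc a b) := measure_mono inter_subset_right
  have := ENNReal.toReal_mono (by simp) h1
  rwa [Real.volume_Ioc, ENNReal.toReal_ofReal (by linarith)] at this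

lemma G_hasDeriv {A : Set ℝ} (hA : MeasurableSet A) (x : ℝ) :
    HasDerivAt (Gfun A) (gfun A x) x :=
  integral_hasDerivAt_right ((g_cont hA).intervalIntegrable _ _)
    ((g_cont hA).stronglyMeasurableAtFilter _ _) (g_cont hA).continuousAt

lemma G_cont {A : Set ℝ} (hA : MeasurableSet A) : Continuous (Gfun A) :=
  intervalIntegral.continuous_primitive (fun a b => (g_cont hA).intervalIntegrable a b) 0

lemma convexOn_congr {E : Type*} [AddCommMonoid E] [Module ℝ E] {s : Set E} {f g : E → ℝ}
    (h : ConvexOn ℝ s f) (he : ∀ x ∈ s, f x = g x) : ConvexOn ℝ s g := by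
  refine ⟨h.1, fun x hx y hy a b ha hb hab => ?_⟩
  rw [← he _ hx, ← he _ hy, ← he _ (h.1 hx hy ha hb hab)]
  exact h.2 hx hy ha hb hab

lemma convexOn_primitive {u : ℝ → ℝ} (hc : Continuous u) (hm : Monotone u) :
    ConvexOn ℝ Set.univ (fun y => ∫ t in (0:ℝ)..y, u t) := by
  apply MonotoneOn.convexOn_of_deriv convex_univ
    (intervalIntegral.continuous_primitive (μ := volume) (fun a b => hc.intervalIntegrable a b) 0).continuousOn
  · intro x _
    exact ((integral_hasDerivAt_right (hc.intervalIntegrable _ _)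
      (hc.stronglyMeasurableAtFilter _ _) hc.continuousAt (b := x)
      (a := 0)).differentiableAt).differentiableWithinAt
  intro x _ y _ hxy
  have dx := (integral_hasDerivAt_right (hc.intervalIntegrable _ _)
    (hc.stronglyMeasurableAtFilter _ _) hc.continuousAt (b := x) (a := 0)).deriv
  have dy := (integral_hasDerivAt_right (hc.intervalIntegrable _ _)
    (hc.stronglyMeasurableAtFilter _ _) hc.continuousAt (b := y) (a := 0)).deriv
  rw [dx, dy]
  exact hm hxy

noncomputable def hh (A : Set ℝ) (x : ℝ) : ℝ := 5/4 * x^2 - 2 * Gfun A x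
noncomputable def ff (A B : Set ℝ) (p : ℝ × ℝ) : ℝ := p.1 * p.2 + hh A p.1 + hh B p.2

lemma ff_cont {A B : Set ℝ} (hA : MeasurableSet A) (hB : MeasurableSet B) :
    Continuous (ff A B) := by
  unfold ff hh
  exact (continuous_fst.mul continuous_snd).add
    ((continuous_const.mul (continuous_fst.pow 2)).sub
      (continuous_const.mul ((G_cont hA).comp continuous_fst))) |>.add
    ((continuous_const.mul (continuous_snd.pow 2)).sub
      (continuous_const.mul ((G_cont hB).comp continuous_snd)))

lemma g_const {A : Set ℝ} (hA : MeasurableSet A) {l r : ℝ} (hdisj : Ioo l r ∩ A = ∅)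
    {x y : ℝ} (hx : x ∈ Ioo l r) (hy : y ∈ Ioo l r) : gfun A x = gfun A y := by
  have key : ∀ u v : ℝ, u ∈ Ioo l r → v ∈ Ioo l r → u ≤ v → gfun A v = gfun A u := by
    intro u v hu hv huv
    have h1 : A ∩ Ioc u v = ∅ := by
      apply eq_empty_of_subset_empty
      rw [← hdisj]
      rintro t ⟨htA, ht1, ht2⟩
      exact ⟨⟨lt_of_lt_of_le hu.1 (le_of_lt ht1), lt_of_le_of_lt ht2 hv.2⟩, htA⟩
    have := g_diff hA huv
    rw [h1] at this
    simp at this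
    linarith
  rcases le_total x y with h | h
  · exact (key x y hx hy h).symm
  · exact key y x hy hx h

lemma G_affine {A : Set ℝ} (hA : MeasurableSet A) {l r : ℝ} (hdisj : Ioo l r ∩ A = ∅)
    {m x : ℝ} (hm : m ∈ Ioo l r) (hx : x ∈ Ioo l r) :
    Gfun A x = Gfun A m + gfun A m * (x - m) := by
  have h1 : Gfun A m + ∫ t in m..x, gfun A t = Gfun A x :=
    integral_add_adjacent_intervals ((g_cont hA).intervalIntegrable _ _)
      ((g_cont hA).intervalIntegrable _ _)
  have h2 : (∫ t in m..x, gfun A t) = gfun A m * (x - m) := by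
    rw [integral_congr (g := fun _ => gfun A m)
      (fun t ht => g_const hA hdisj ((ordConnected_Ioo).uIcc_subset hm hx ht) hm)]
    simp [mul_comm]
  linarith

lemma sq_affine_convex (c1 c2 : ℝ) :
    ConvexOn ℝ (univ : Set (ℝ × ℝ)) (fun p => (c1 * p.1 + c2 * p.2) ^ 2 / 2) := by
  refine ⟨convex_univ, ?_⟩
  rintro ⟨x1, x2⟩ - ⟨y1, y2⟩ - a b ha hb hab
  simp only [Prod.smul_mk, Prod.mk_add_mk, smul_eq_mul]
  nlinarith [sq_nonneg (c1 * x1 + c2 * x2 - (c1 * y1 + c2 * y2)), mul_nonneg ha hb]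

lemma conv_quad (aq bq cq : ℝ) (haq : 0 ≤ aq) :
    ConvexOn ℝ (univ : Set ℝ) (fun x : ℝ => aq * x ^ 2 + bq * x + cq) := by
  refine ⟨convex_univ, fun x _ y _ p q hp hq hpq => ?_⟩
  simp only [smul_eq_mul]
  have hq1 : q = 1 - p := by linarith
  subst hq1
  nlinarith [mul_nonneg (mul_nonneg haq hp) (mul_nonneg (by linarith : (0:ℝ) ≤ 1 - p)
    (sq_nonneg (x - y)))]

lemma conv_fst {φ : ℝ → ℝ} (h : ConvexOn ℝ (univ : Set ℝ) φ) :
    ConvexOn ℝ (univ : Set (ℝ × ℝ)) (fun p => φ p.1) := by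
  refine ⟨convex_univ, fun x _ y _ a b ha hb hab => ?_⟩
  simpa using h.2 (mem_univ x.1) (mem_univ y.1) ha hb hab

lemma conv_snd {φ : ℝ → ℝ} (h : ConvexOn ℝ (univ : Set ℝ) φ) :
    ConvexOn ℝ (univ : Set (ℝ × ℝ)) (fun p => φ p.2) := by
  refine ⟨convex_univ, fun x _ y _ a b ha hb hab => ?_⟩
  simpa using h.2 (mem_univ x.2) (mem_univ y.2) ha hb hab

lemma psi_convex {B : Set ℝ} (hB : MeasurableSet B) :
    ConvexOn ℝ (univ : Set ℝ) (fun y : ℝ => 37/36 * y ^ 2 - 2 * Gfun B y) := by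
  have hu1 : Continuous (fun t : ℝ => 37/18 * t) := by fun_prop
  have hu2 : Continuous (fun t : ℝ => 2 * gfun B t) := continuous_const.mul (g_cont hB)
  have hu : Continuous (fun t : ℝ => 37/18 * t - 2 * gfun B t) := hu1.sub hu2
  have hm : Monotone (fun t : ℝ => 37/18 * t - 2 * gfun B t) := by
    intro s t hst
    have h1 := g_diff_le hB hst
    simp only
    linarith
  refine convexOn_congr (convexOn_primitive hu hm) fun y _ => ?_
  rw [integral_sub (hu1.intervalIntegrable _ _) (hu2.intervalIntegrable _ _),
    intervalIntegral.integral_const_mul, intervalIntegral.integral_const_mul, integral_id]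
  show 37/18 * ((y ^ 2 - 0 ^ 2) / 2) - 2 * Gfun B y = _
  unfold Gfun
  ring

lemma strip {A B : Set ℝ} (hA : MeasurableSet A) (hB : MeasurableSet B) {l r : ℝ}
    (hdisj : Ioo l r ∩ A = ∅) (hlr : l < r) :
    ConvexOn ℝ (Ioo l r ×ˢ (univ : Set ℝ)) (ff A B) := by
  set m := (l + r) / 2 with hmdef
  have hmI : m ∈ Ioo l r := ⟨by simp only [hmdef]; linarith, by simp only [hmdef]; linarith⟩
  set c := gfun A m with hcdef
  have hQ := sq_affine_convex (3/2) (2/3)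
  have hΦ : ConvexOn ℝ (univ : Set (ℝ × ℝ))
      (fun p : ℝ × ℝ => 1/8 * p.1 ^ 2 - 2 * (Gfun A m + c * (p.1 - m))) := by
    refine conv_fst (φ := fun x : ℝ => 1/8 * x ^ 2 - 2 * (Gfun A m + c * (x - m)))
      (convexOn_congr (conv_quad (1/8) (-2 * c) (-2 * Gfun A m + 2 * c * m)
      (by norm_num)) fun x _ => by ring)
  have hΨ := conv_snd (psi_convex hB)
  have hsum := (hQ.add hΦ).add hΨ
  refine convexOn_congr (hsum.subset (subset_univ _) ((convex_Ioo l r).prod convex_univ)) ?_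
  rintro ⟨x, y⟩ ⟨hx, -⟩
  have hGa := G_affine hA hdisj hmI hx
  simp only [Pi.add_apply, ff, hh]
  rw [hGa]
  ring

lemma density_bound {A : Set ℝ} (hA : MeasurableSet A) (hAm : 0 < volume A) :
    ∃ a : ℝ, ∃ ε : ℝ, 0 < ε ∧
      ∀ r : ℝ, 0 < r → r < ε → 7/4 * r ≤ gfun A (a + r) - gfun A (a - r) := by
  have h1 := Besicovitch.ae_tendsto_measure_inter_div volume A
  have hne : (volume.restrict A) ≠ 0 := by
    intro h
    rw [← Measure.restrict_apply_univ A, h] at hAm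
    simp at hAm
  have : (ae (volume.restrict A)).NeBot := ae_neBot.2 hne
  obtain ⟨a, hda⟩ := h1.exists
  have h78 : (7/8 : ENNReal) < 1 := by
    rw [ENNReal.div_lt_iff (Or.inl (by norm_num)) (Or.inl (by norm_num))]
    norm_num
  have h3 : ∀ᶠ r in nhdsWithin (0:ℝ) (Ioi 0),
      7/8 < volume (A ∩ Metric.closedBall a r) / volume (Metric.closedBall a r) :=
    hda.eventually (eventually_gt_nhds h78)
  obtain ⟨ε, hε, hsub⟩ := mem_nhdsGT_iff_exists_Ioo_subset.1 h3
  refine ⟨a, ε, hε, fun r hr hrε => ?_⟩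
  have hP := hsub ⟨hr, hrε⟩
  simp only [mem_setOf_eq] at hP
  have hball : Metric.closedBall a r = Icc (a - r) (a + r) := Real.closedBall_eq_Icc
  rw [hball, Real.volume_Icc] at hP
  have h2r : a + r - (a - r) = 2 * r := by ring
  rw [h2r] at hP
  have hd0 : ENNReal.ofReal (2 * r) ≠ 0 := by
    simp [ENNReal.ofReal_pos]; linarith
  have hdt : ENNReal.ofReal (2 * r) ≠ ⊤ := ENNReal.ofReal_ne_top
  rw [ENNReal.lt_div_iff_mul_lt (Or.inl hd0) (Or.inl hdt)] at hP
  -- hP : 7/8 * ofReal (2r) < volume (A ∩ Icc (a-r) (a+r))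
  have hIccIoc : volume (A ∩ Icc (a - r) (a + r)) ≤ volume (A ∩ Ioc (a - r) (a + r)) := by
    have hsub2 : A ∩ Icc (a - r) (a + r) ⊆ (A ∩ Ioc (a - r) (a + r)) ∪ {a - r} := by
      rintro x ⟨hxA, hx1, hx2⟩
      rcases eq_or_lt_of_le hx1 with h | h
      · exact Or.inr (by simp [h.symm])
      · exact Or.inl ⟨hxA, h, hx2⟩
    calc volume (A ∩ Icc (a - r) (a + r)) ≤ volume ((A ∩ Ioc (a - r) (a + r)) ∪ {a - r}) :=
          measure_mono hsub2
      _ ≤ volume (A ∩ Ioc (a - r) (a + r)) + volume ({a - r} : Set ℝ) := measure_union_le _ _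
      _ = volume (A ∩ Ioc (a - r) (a + r)) := by simp
  have hkey : ENNReal.ofReal (7/4 * r) ≤ volume (A ∩ Ioc (a - r) (a + r)) := by
    refine le_trans ?_ (le_trans (le_of_lt hP) hIccIoc)
    rw [show (7/8 : ENNReal) = ENNReal.ofReal (7/8) by
      rw [ENNReal.ofReal_div_of_pos (by norm_num)]; norm_num,
      ← ENNReal.ofReal_mul (by norm_num)]
    apply ENNReal.ofReal_le_ofReal
    linarith
  have hfin : volume (A ∩ Ioc (a - r) (a + r)) ≠ ⊤ :=
    (lt_of_le_of_lt (measure_mono inter_subset_right) measure_Ioc_lt_top).ne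
  rw [g_diff hA (by linarith : a - r ≤ a + r)]
  calc 7/4 * r = (ENNReal.ofReal (7/4 * r)).toReal := by
        rw [ENNReal.toReal_ofReal (by linarith)]
    _ ≤ (volume (A ∩ Ioc (a - r) (a + r))).toReal := ENNReal.toReal_mono hfin hkey

lemma G_second_diff {A : Set ℝ} (hA : MeasurableSet A) (a t : ℝ) :
    Gfun A (a + t) + Gfun A (a - t) - 2 * Gfun A a
      = ∫ s in (0:ℝ)..t, (gfun A (a + s) - gfun A (a - s)) := by
  have e1 : (∫ s in (0:ℝ)..t, gfun A (a + s)) = ∫ u in a..(a + t), gfun A u := by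
    simpa using integral_comp_add_left (a := (0:ℝ)) (b := t) (fun u => gfun A u) a
  have e2 : (∫ s in (0:ℝ)..t, gfun A (a - s)) = ∫ u in (a - t)..a, gfun A u := by
    simpa using integral_comp_sub_left (a := (0:ℝ)) (b := t) (fun u => gfun A u) a
  have h1 : Gfun A a + ∫ u in a..(a + t), gfun A u = Gfun A (a + t) :=
    integral_add_adjacent_intervals ((g_cont hA).intervalIntegrable _ _)
      ((g_cont hA).intervalIntegrable _ _)
  have h2 : Gfun A (a - t) + ∫ u in (a - t)..a, gfun A u = Gfun A a :=
    integral_add_adjacent_intervals ((g_cont hA).intervalIntegrable _ _)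
      ((g_cont hA).intervalIntegrable _ _)
  have c1 : Continuous (fun s : ℝ => gfun A (a + s)) := (g_cont hA).comp (by fun_prop)
  have c2 : Continuous (fun s : ℝ => gfun A (a - s)) := (g_cont hA).comp (by fun_prop)
  rw [integral_sub (c1.intervalIntegrable _ _) (c2.intervalIntegrable _ _), e1, e2]
  linarith

lemma second_diff_lb {A : Set ℝ} (hA : MeasurableSet A) {a ε : ℝ}
    (hbd : ∀ r : ℝ, 0 < r → r < ε → 7/4 * r ≤ gfun A (a + r) - gfun A (a - r))
    {t : ℝ} (ht : 0 < t) (htε : t < ε) :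
    7/8 * t ^ 2 ≤ Gfun A (a + t) + Gfun A (a - t) - 2 * Gfun A a := by
  rw [G_second_diff hA]
  have hcont : Continuous (fun s : ℝ => gfun A (a + s) - gfun A (a - s)) :=
    ((g_cont hA).comp (by fun_prop)).sub ((g_cont hA).comp (by fun_prop))
  have hmono : (∫ s in (0:ℝ)..t, 7/4 * s)
      ≤ ∫ s in (0:ℝ)..t, (gfun A (a + s) - gfun A (a - s)) := by
    have ci : IntervalIntegrable (fun s : ℝ => 7/4 * s) volume 0 t :=
      (by fun_prop : Continuous fun s : ℝ => 7/4 * s).intervalIntegrable _ _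
    refine integral_mono_on (le_of_lt ht) ci (hcont.intervalIntegrable _ _) fun s hs => ?_
    rcases eq_or_lt_of_le hs.1 with h | h
    · simp [← h]
    · exact hbd s h (lt_of_le_of_lt hs.2 htε)
  have hval : (∫ s in (0:ℝ)..t, 7/4 * s) = 7/8 * t ^ 2 := by
    rw [intervalIntegral.integral_const_mul, integral_id]
    ring
  linarith

lemma not_convex {A B : Set ℝ} (hA : MeasurableSet A) (hB : MeasurableSet B)
    (hAm : 0 < volume A) (hBm : 0 < volume B) :
    ¬ ConvexOn ℝ (univ : Set (ℝ × ℝ)) (ff A B) := by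
  obtain ⟨a, εA, hεA, hbdA⟩ := density_bound hA hAm
  obtain ⟨b, εB, hεB, hbdB⟩ := density_bound hB hBm
  intro hconv
  set t := min εA εB / 2 with htdef
  have ht : 0 < t := by
    rw [htdef]
    have := lt_min hεA hεB
    positivity
  have htA : t < εA := by
    rw [htdef]
    have := min_le_left εA εB
    linarith
  have htB : t < εB := by
    rw [htdef]
    have := min_le_right εA εB
    linarith
  have h1 := hconv.2 (mem_univ ((a + t, b - t) : ℝ × ℝ)) (mem_univ ((a - t, b + t) : ℝ × ℝ))
    (by norm_num : (0:ℝ) ≤ 1/2) (by norm_num : (0:ℝ) ≤ 1/2) (by norm_num)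
  have hmid : ((1:ℝ)/2) • ((a + t, b - t) : ℝ × ℝ) + ((1:ℝ)/2) • ((a - t, b + t) : ℝ × ℝ)
      = ((a, b) : ℝ × ℝ) := by
    rw [Prod.ext_iff]
    constructor <;> · simp [Prod.smul_mk]; ring
  rw [hmid] at h1
  have dA := second_diff_lb hA hbdA ht htA
  have dB := second_diff_lb hB hbdB ht htB
  simp only [ff, hh, smul_eq_mul] at h1
  have ht2 : 0 < t ^ 2 := by positivity
  nlinarith [h1, dA, dB, ht2]

lemma strip' {A B : Set ℝ} (hA : MeasurableSet A) (hB : MeasurableSet B) {l r : ℝ}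
    (hdisj : Ioo l r ∩ B = ∅) (hlr : l < r) :
    ConvexOn ℝ ((univ : Set ℝ) ×ˢ Ioo l r) (ff A B) := by
  have h := strip hB hA hdisj hlr
  have h2 := h.comp_linearMap ((LinearEquiv.prodComm ℝ ℝ ℝ).toLinearMap)
  have hset : ((LinearEquiv.prodComm ℝ ℝ ℝ).toLinearMap) ⁻¹' (Ioo l r ×ˢ (univ : Set ℝ))
      = (univ : Set ℝ) ×ˢ Ioo l r := by
    ext ⟨u, v⟩
    simp [LinearEquiv.prodComm]
    exact Iff.rfl
  rw [hset] at h2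
  refine convexOn_congr h2 ?_
  rintro ⟨u, v⟩ -
  simp only [Function.comp, ff, hh, LinearEquiv.coe_coe, LinearEquiv.prodComm_apply,
    Prod.swap_prod_mk]
  ring

/-- `f` is locally convex on the open set `U`: every point of `U` has an open convex
neighbourhood `V ⊆ U` on which `f` is convex. -/
def IsLocallyConvexOn (U : Set (ℝ × ℝ)) (f : ℝ × ℝ → ℝ) : Prop :=
  ∀ x ∈ U, ∃ V : Set (ℝ × ℝ),
    IsOpen V ∧ Convex ℝ V ∧ x ∈ V ∧ V ⊆ U ∧ ConvexOn ℝ V f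

theorem statement2 (A B : Set ℝ) (hA : IsClosed A) (hB : IsClosed B)
    (hAm : 0 < MeasureTheory.volume A) (hBm : 0 < MeasureTheory.volume B) :
    ∃ f : ℝ × ℝ → ℝ, Continuous f ∧ IsLocallyConvexOn (A ×ˢ B)ᶜ f ∧
      ¬ ConvexOn ℝ Set.univ f := by
  have hAmeas := hA.measurableSet
  have hBmeas := hB.measurableSet
  refine ⟨ff A B, ff_cont hAmeas hBmeas, ?_, not_convex hAmeas hBmeas hAm hBm⟩
  rintro ⟨x, y⟩ hp
  rw [mem_compl_iff, mem_prod] at hp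
  push_neg at hp
  by_cases hx : x ∈ A
  · -- then y ∉ B
    have hy : y ∉ B := hp hx
    obtain ⟨δ, hδ, hball⟩ := Metric.isOpen_iff.1 hB.isOpen_compl y hy
    rw [Real.ball_eq_Ioo] at hball
    refine ⟨(univ : Set ℝ) ×ˢ Ioo (y - δ) (y + δ), isOpen_univ.prod isOpen_Ioo,
      convex_univ.prod (convex_Ioo _ _), ⟨trivial, by constructor <;> linarith⟩, ?_, ?_⟩
    · rintro ⟨u, v⟩ ⟨-, hv⟩
      rw [mem_compl_iff, mem_prod]
      rintro ⟨-, hvB⟩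
      exact hball hv hvB
    · refine strip' hAmeas hBmeas ?_ (by linarith)
      apply eq_empty_of_subset_empty
      rintro s ⟨hs1, hs2⟩
      exact hball hs1 hs2
  · obtain ⟨δ, hδ, hball⟩ := Metric.isOpen_iff.1 hA.isOpen_compl x hx
    rw [Real.ball_eq_Ioo] at hball
    refine ⟨Ioo (x - δ) (x + δ) ×ˢ (univ : Set ℝ), isOpen_Ioo.prod isOpen_univ,
      (convex_Ioo _ _).prod convex_univ, ⟨by constructor <;> linarith, trivial⟩, ?_, ?_⟩
    · rintro ⟨u, v⟩ ⟨hu, -⟩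
      rw [mem_compl_iff, mem_prod]
      rintro ⟨huA, -⟩
      exact hball hu huA
    · refine strip hAmeas hBmeas ?_ (by linarith)
      apply eq_empty_of_subset_empty
      rintro s ⟨hs1, hs2⟩
      exact hball hs1 hs2
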